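/- For every complex matrix C on ℂ^{d1}⊗ℂ^{d2} with singular values σ1 ≥ … ≥ σ_{d1d2}, the vector of singular values of tr_2[C] is weakly majorized by the vector (Σ_{s=1}^{d2} σ_{(j−1)d2+s})_{j=1}^{d1} ∈ ℝ^{d1}, and the vector of singular values of tr_1[C] is weakly majorized by the vector (Σ_{s=1}^{d1} σ_{(i−1)d1+s})_{i=1}^{d2} ∈ ℝ^{d2}. -/

import Mathlib

open Matrix Finset Kronecker
open scoped ComplexOrder

/-- The first partial trace of a matrix on `ℂ^{d1} ⊗ ℂ^{d2}` (index pairs `(i,s)` ordered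
lexicographically): `(tr_1 C)_{s,t} = ∑_i C_{(i,s),(i,t)}`. -/
noncomputable def ptrace1 {d1 d2 : ℕ} (C : Matrix (Fin d1 × Fin d2) (Fin d1 × Fin d2) ℂ) :
    Matrix (Fin d2) (Fin d2) ℂ :=
  Matrix.of fun s t => ∑ i : Fin d1, C (i, s) (i, t)

/-- The second partial trace: `(tr_2 C)_{i,j} = ∑_s C_{(i,s),(j,s)}`. -/
noncomputable def ptrace2 {d1 d2 : ℕ} (C : Matrix (Fin d1 × Fin d2) (Fin d1 × Fin d2) ℂ) :
    Matrix (Fin d1) (Fin d1) ℂ :=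
  Matrix.of fun i j => ∑ s : Fin d2, C (i, s) (j, s)

/-- The sum of the `k` largest entries of the vector `x` (the largest value of a sum of `k`
entries of `x`), i.e. `∑_{i=1}^k x_i^↓`. -/
noncomputable def maxSum {ι : Type*} [Fintype ι] (x : ι → ℝ) (k : ℕ) : ℝ :=
  sSup {s : ℝ | ∃ A : Finset ι, A.card = k ∧ s = ∑ i ∈ A, x i}

/-- `x ≺ y` (majorization): for every `k`, the sum of the `k` largest entries of `x` is at
most the sum of the `k` largest entries of `y`, and the total sums are equal. -/
def Majorizes {ι κ : Type*} [Fintype ι] [Fintype κ] (x : ι → ℝ) (y : κ → ℝ) : Prop :=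
  (∀ k : ℕ, maxSum x k ≤ maxSum y k) ∧ ∑ i, x i = ∑ j, y j

/-- `x ≺_w y` (weak majorization). -/
def WeakMajorizes {ι κ : Type*} [Fintype ι] [Fintype κ] (x : ι → ℝ) (y : κ → ℝ) : Prop :=
  ∀ k : ℕ, maxSum x k ≤ maxSum y k

/-- The singular values of a square complex matrix `A`: the (unordered) family of eigenvalues
of `√(AᴴA)`, i.e. the square roots of the eigenvalues of `AᴴA`. -/
noncomputable def singvals {n : Type*} [Fintype n] [DecidableEq n] (A : Matrix n n ℂ) :
    n → ℝ :=
  fun i => Real.sqrt ((Matrix.isHermitian_conjTranspose_mul_self A).eigenvalues i)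

open scoped ComplexInnerProductSpace

section MaxSum
variable {ι : Type*} [Fintype ι] (x : ι → ℝ) (k : ℕ)

lemma maxSum_set_eq :
    {s : ℝ | ∃ A : Finset ι, A.card = k ∧ s = ∑ i ∈ A, x i} =
      ↑((Finset.univ.powersetCard k).image (fun A => ∑ i ∈ A, x i)) := by
  ext s
  simp only [Set.mem_setOf_eq, Finset.coe_image, Set.mem_image, Finset.mem_coe,
    Finset.mem_powersetCard]
  constructor
  · rintro ⟨A, hA, rfl⟩; exact ⟨A, ⟨Finset.subset_univ A, hA⟩, rfl⟩
  · rintro ⟨A, ⟨-, hA⟩, rfl⟩; exact ⟨A, hA, rfl⟩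

lemma maxSum_bddAbove :
    BddAbove {s : ℝ | ∃ A : Finset ι, A.card = k ∧ s = ∑ i ∈ A, x i} := by
  rw [maxSum_set_eq]
  exact (Finset.image _ _).finite_toSet.bddAbove

lemma sum_le_maxSum (A : Finset ι) (h : A.card = k) : ∑ i ∈ A, x i ≤ maxSum x k :=
  le_csSup (maxSum_bddAbove x k) ⟨A, h, rfl⟩

lemma maxSum_le {B : ℝ} (hk : k ≤ Fintype.card ι)
    (hB : ∀ A : Finset ι, A.card = k → ∑ i ∈ A, x i ≤ B) : maxSum x k ≤ B := by
  obtain ⟨A, -, hA⟩ := Finset.exists_subset_card_eq (s := (Finset.univ : Finset ι)) (n := k)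
    (by simpa using hk)
  refine csSup_le ⟨_, A, hA, rfl⟩ ?_
  rintro s ⟨A, hA, rfl⟩
  exact hB A hA

lemma maxSum_of_card_lt (hk : Fintype.card ι < k) : maxSum x k = 0 := by
  have : {s : ℝ | ∃ A : Finset ι, A.card = k ∧ s = ∑ i ∈ A, x i} = ∅ := by
    ext s
    simp only [Set.mem_setOf_eq, Set.mem_empty_iff_false, iff_false, not_exists]
    rintro A ⟨hA, -⟩
    exact absurd (hA ▸ Finset.card_le_univ A) (by simpa using hk.not_ge)
  rw [maxSum, this, Real.sSup_empty]

lemma exists_topset : ∀ k, k ≤ Fintype.card ι →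
    ∃ T : Finset ι, T.card = k ∧ ∀ i ∈ T, ∀ j ∉ T, x j ≤ x i := by
  classical
  intro k
  induction k with
  | zero => exact fun _ => ⟨∅, by simp⟩
  | succ k ih =>
    intro hk
    obtain ⟨T, hTcard, hT⟩ := ih (le_of_lt hk)
    have hne : (Finset.univ \ T).Nonempty := by
      rw [Finset.sdiff_nonempty]
      intro hsub
      have := Finset.card_le_card hsub
      simp only [Finset.card_univ, hTcard] at this
      omega
    obtain ⟨i0, hi0mem, hi0⟩ := Finset.exists_max_image _ x hne
    have hi0T : i0 ∉ T := (Finset.mem_sdiff.1 hi0mem).2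
    refine ⟨insert i0 T, by rw [Finset.card_insert_of_notMem hi0T, hTcard], ?_⟩
    intro i hi j hj
    rcases Finset.mem_insert.1 hi with rfl | hiT
    · exact hi0 j (Finset.mem_sdiff.2 ⟨Finset.mem_univ _, fun h => hj (Finset.mem_insert_of_mem h)⟩)
    · exact hT i hiT j (fun h => hj (Finset.mem_insert_of_mem h))

lemma sum_mul_le_maxSum (σ c : ι → ℝ) (hσ : ∀ i, 0 ≤ σ i) (hc0 : ∀ i, 0 ≤ c i)
    (hc1 : ∀ i, c i ≤ 1) (k : ℕ) (hk : k ≤ Fintype.card ι) (hsum : ∑ i, c i ≤ (k : ℝ)) :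
    ∑ i, σ i * c i ≤ maxSum σ k := by
  classical
  obtain ⟨T, hTcard, hT⟩ := exists_topset σ k hk
  rcases Nat.eq_zero_or_pos k with rfl | hkpos
  · have hc : ∀ i, c i = 0 := fun i =>
      le_antisymm (le_trans (Finset.single_le_sum (f := c) (fun j _ => hc0 j)
        (Finset.mem_univ i)) (by simpa using hsum)) (hc0 i)
    simp only [hc, mul_zero, Finset.sum_const_zero]
    simpa using sum_le_maxSum σ 0 ∅ (by simp)
  · have hTne : T.Nonempty := Finset.card_pos.1 (hTcard ▸ hkpos)
    obtain ⟨i0, hi0T, hi0⟩ := Finset.exists_min_image T σ hTne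
    set m := σ i0 with hm
    have hm0 : 0 ≤ m := hσ i0
    have hout : ∀ j ∉ T, σ j ≤ m := fun j hj => hT i0 hi0T j hj
    have key1 : ∑ i ∈ Finset.univ \ T, σ i * c i ≤ m * ∑ i ∈ Finset.univ \ T, c i := by
      rw [Finset.mul_sum]
      refine Finset.sum_le_sum fun j hj => ?_
      exact mul_le_mul_of_nonneg_right (hout j (Finset.mem_sdiff.1 hj).2) (hc0 j)
    have hsplit : ∑ i, σ i * c i = ∑ i ∈ T, σ i * c i + ∑ i ∈ Finset.univ \ T, σ i * c i := by
      rw [← Finset.sum_sdiff (Finset.subset_univ T)]; ring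
    have hcsplit : ∑ i ∈ Finset.univ \ T, c i = ∑ i, c i - ∑ i ∈ T, c i := by
      rw [← Finset.sum_sdiff (Finset.subset_univ T)]; ring
    have key2 : m * ∑ i ∈ Finset.univ \ T, c i ≤ m * ((k : ℝ) - ∑ i ∈ T, c i) := by
      apply mul_le_mul_of_nonneg_left _ hm0
      rw [hcsplit]; linarith
    have key3 : ∑ i ∈ T, σ i * c i + m * ((k : ℝ) - ∑ i ∈ T, c i) ≤ ∑ i ∈ T, σ i := by
      have h1 : ∑ i ∈ T, σ i * c i - m * ∑ i ∈ T, c i = ∑ i ∈ T, (σ i - m) * c i := by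
        rw [Finset.mul_sum, ← Finset.sum_sub_distrib]
        exact Finset.sum_congr rfl fun i _ => by ring
      have h2 : ∑ i ∈ T, (σ i - m) * c i ≤ ∑ i ∈ T, (σ i - m) := by
        refine Finset.sum_le_sum fun i hi => ?_
        have := hi0 i hi
        nlinarith [hc0 i, hc1 i]
      have h3 : ∑ i ∈ T, (σ i - m) = ∑ i ∈ T, σ i - (k : ℝ) * m := by
        rw [Finset.sum_sub_distrib, Finset.sum_const, hTcard, nsmul_eq_mul]; try ring
      nlinarith
    calc ∑ i, σ i * c i ≤ ∑ i ∈ T, σ i * c i + m * ((k:ℝ) - ∑ i ∈ T, c i) := by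
          rw [hsplit]; linarith
      _ ≤ ∑ i ∈ T, σ i := key3
      _ ≤ maxSum σ k := sum_le_maxSum σ k T hTcard

lemma sum_antitone_le {N : ℕ} (μ : Fin N → ℝ) (hμ : Antitone μ) (A : Finset (Fin N))
    {k : ℕ} (h : A.card = k) (hk : k ≤ N) :
    ∑ i ∈ A, μ i ≤ ∑ j : Fin k, μ (Fin.castLE hk j) := by
  have e := A.orderIsoOfFin h
  have hmono : StrictMono fun j : Fin k => ((e j : Fin N) : ℕ) :=
    fun a b hab => by exact_mod_cast (e.lt_iff_lt.2 hab)
  have hle : ∀ (jv : ℕ) (hj : jv < k), jv ≤ ((e ⟨jv, hj⟩ : Fin N) : ℕ) := by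
    intro jv
    induction jv with
    | zero => exact fun _ => Nat.zero_le _
    | succ p ih =>
      intro hj
      have h1 : p < k := lt_trans (Nat.lt_succ_self p) hj
      have h2 := ih h1
      have hlt : ((e ⟨p, h1⟩ : Fin N) : ℕ) < ((e ⟨p + 1, hj⟩ : Fin N) : ℕ) :=
        hmono (by simp [Fin.lt_def])
      omega
  have key : ∑ i ∈ A, μ i = ∑ j : Fin k, μ (e j) := by
    rw [← Finset.sum_attach A (fun i => μ i)]
    exact (Equiv.sum_comp e.toEquiv (fun i => μ i.1)).symm
  rw [key]
  refine Finset.sum_le_sum fun j _ => ?_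
  apply hμ
  simpa [Fin.le_def] using hle j.1 j.2

section Bessel
variable {κ E : Type*} [Fintype κ] [NormedAddCommGroup E] [InnerProductSpace ℂ E]

lemma bessel_aux (f : κ → E) (ho : ∀ i j, i ≠ j → ⟪f i, f j⟫ = 0) (hn : ∀ i, ‖f i‖ ≤ 1)
    (x : E) : ∑ i, ‖⟪f i, x⟫‖ ^ 2 ≤ ‖x‖ ^ 2 := by
  classical
  set c : κ → ℂ := fun i => ⟪f i, x⟫ with hc
  set w : E := ∑ i, c i • f i with hw
  have hxw : RCLike.re (⟪x, w⟫) = ∑ i, ‖c i‖ ^ 2 := by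
    rw [hw, inner_sum]
    have : ∀ i, ⟪x, c i • f i⟫ = ((‖c i‖ : ℂ)) ^ 2 := by
      intro i
      rw [inner_smul_right, ← inner_conj_symm x (f i)]
      rw [show (starRingEnd ℂ) ⟪f i, x⟫ = (starRingEnd ℂ) (c i) from rfl]
      rw [Complex.mul_conj']
    rw [Finset.sum_congr rfl fun i _ => this i]
    rw [map_sum]
    refine Finset.sum_congr rfl fun i _ => ?_
    simp [RCLike.re_to_complex]
    norm_cast
  have hww : RCLike.re (⟪w, w⟫) ≤ ∑ i, ‖c i‖ ^ 2 := by
    have h1 : ⟪w, w⟫ = ∑ i, (starRingEnd ℂ) (c i) * (c i * ⟪f i, f i⟫) := by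
      rw [hw, sum_inner]
      refine Finset.sum_congr rfl fun i _ => ?_
      rw [inner_smul_left]
      congr 1
      rw [inner_sum]
      rw [Finset.sum_eq_single i (fun j _ hji => by
        rw [inner_smul_right, ho i j (fun h => hji h.symm), mul_zero]) (by simp)]
      rw [inner_smul_right]
    rw [h1]
    rw [map_sum]
    refine Finset.sum_le_sum fun i _ => ?_
    have hfi : ⟪f i, f i⟫ = ((‖f i‖ : ℂ)) ^ 2 := inner_self_eq_norm_sq_to_K (f i)
    rw [hfi]
    have : (starRingEnd ℂ) (c i) * (c i * ((‖f i‖ : ℂ)) ^ 2)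
        = ((‖c i‖ ^ 2 * ‖f i‖ ^ 2 : ℝ) : ℂ) := by
      rw [← mul_assoc, mul_comm ((starRingEnd ℂ) (c i)) (c i), Complex.mul_conj']
      push_cast
      ring
    rw [this]
    simp only [RCLike.re_to_complex, Complex.ofReal_re]
    have hf2 : ‖f i‖ ^ 2 ≤ 1 := by nlinarith [norm_nonneg (f i), hn i]
    have := mul_le_mul_of_nonneg_left hf2 (sq_nonneg (‖c i‖))
    simpa using this
  have hns := sq_nonneg (‖x - w‖)
  have hsub : ‖x - w‖ ^ 2 = ‖x‖ ^ 2 - 2 * RCLike.re (⟪x, w⟫) + ‖w‖ ^ 2 :=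
    @norm_sub_sq ℂ _ _ _ _ x w
  have hwn : ‖w‖ ^ 2 = RCLike.re (⟪w, w⟫) := (inner_self_eq_norm_sq w).symm
  rw [hsub, hwn, hxw] at hns
  linarith
end Bessel

def toEuc {n : Type*} (x : n → ℂ) : EuclideanSpace ℂ n := WithLp.toLp 2 x

section SVD
variable {n : Type*} [Fintype n] [DecidableEq n]

lemma singvals_nonneg (A : Matrix n n ℂ) (i : n) : 0 ≤ singvals A i :=
  Real.sqrt_nonneg _

lemma singvals_sq (A : Matrix n n ℂ) (i : n) :
    (singvals A i) ^ 2 = (Matrix.isHermitian_conjTranspose_mul_self A).eigenvalues i :=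
  Real.sq_sqrt ((Matrix.posSemidef_conjTranspose_mul_self A).eigenvalues_nonneg i)

lemma inner_mulVec_mulVec (A : Matrix n n ℂ) (x y : EuclideanSpace ℂ n) :
    ⟪toEuc (A *ᵥ x), toEuc (A *ᵥ y)⟫
      = ⟪x, toEuc ((Aᴴ * A) *ᵥ y)⟫ := by
  show dotProduct (A *ᵥ y) (star (A *ᵥ x))
    = dotProduct ((Aᴴ * A) *ᵥ y) (star x.ofLp)
  rw [dotProduct_comm, dotProduct_comm _ (star _)]
  rw [star_mulVec, ← dotProduct_mulVec, Matrix.mulVec_mulVec]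

lemma exists_svd_data (A : Matrix n n ℂ) :
    ∃ u v : n → EuclideanSpace ℂ n,
      (∀ i j, i ≠ j → ⟪u i, u j⟫ = 0) ∧ (∀ i, ‖u i‖ ≤ 1) ∧
      (∀ i, singvals A i ≠ 0 → ‖u i‖ = 1) ∧
      Orthonormal ℂ v ∧
      (∀ x : EuclideanSpace ℂ n,
        toEuc (A *ᵥ x) = ∑ i, (⟪v i, x⟫ * (singvals A i : ℂ)) • u i) := by
  classical
  set hA := Matrix.isHermitian_conjTranspose_mul_self A with hhA
  set V : OrthonormalBasis n ℂ (EuclideanSpace ℂ n) := hA.eigenvectorBasis with hV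
  set σ : n → ℝ := singvals A with hσ
  have hσ0 : ∀ i, 0 ≤ σ i := singvals_nonneg A
  have hσsq : ∀ i, (σ i : ℝ) ^ 2 = hA.eigenvalues i := singvals_sq A
  have hAv : ∀ i, toEuc ((Aᴴ * A) *ᵥ (V i))
      = ((hA.eigenvalues i : ℂ)) • (V i) := by
    intro i
    have h := hA.mulVec_eigenvectorBasis i
    ext a
    have := congrFun h a
    simpa [Complex.real_smul, toEuc] using this
  have hAA : ∀ i j, ⟪toEuc (A *ᵥ (V i)), toEuc (A *ᵥ (V j))⟫
      = if i = j then ((hA.eigenvalues j : ℂ)) else 0 := by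
    intro i j
    rw [inner_mulVec_mulVec, hAv j, inner_smul_right]
    rcases eq_or_ne i j with rfl | hij
    · simp [orthonormal_iff_ite.1 V.orthonormal i i]
    · simp [hij, orthonormal_iff_ite.1 V.orthonormal i j]
  set u : n → EuclideanSpace ℂ n := fun i =>
    if σ i = 0 then 0 else ((σ i : ℂ))⁻¹ • toEuc (A *ᵥ (V i)) with hu
  have hAVu : ∀ i, toEuc (A *ᵥ (V i)) = ((σ i : ℂ)) • u i := by
    intro i
    rcases eq_or_ne (σ i) 0 with h0 | h0
    · have : ⟪toEuc (A *ᵥ (V i)), toEuc (A *ᵥ (V i))⟫ = 0 := by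
        rw [hAA i i]
        simp [← hσsq i, h0]
      rw [inner_self_eq_zero.1 this, hu]
      simp [h0]
    · rw [hu]
      simp only [h0, if_false]
      rw [smul_smul]
      rw [mul_inv_cancel₀ (by exact_mod_cast h0), one_smul]
  have huu : ∀ i j, ⟪u i, u j⟫ = if i = j ∧ σ i ≠ 0 then 1 else 0 := by
    intro i j
    rcases eq_or_ne (σ i) 0 with h0 | h0
    · rw [hu]; simp [h0]
    rcases eq_or_ne (σ j) 0 with h1 | h1
    · have hne : i ≠ j := fun h => h0 (h ▸ h1)
      rw [hu]; simp [h0, h1, hne]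
    rw [hu]
    simp only [h0, h1, if_false]
    rw [inner_smul_left, inner_smul_right, hAA i j]
    rcases eq_or_ne i j with rfl | hij
    · simp only [if_pos rfl, h0, ne_eq, not_false_iff, and_self, if_pos]
      rw [← hσsq i, ← Complex.ofReal_inv, Complex.conj_ofReal]
      push_cast
      field_simp
    · simp [hij]
  refine ⟨u, V, ?_, ?_, ?_, V.orthonormal, ?_⟩
  · intro i j hij
    rw [huu]
    simp [hij]
  · intro i
    rcases eq_or_ne (σ i) 0 with h0 | h0
    · rw [hu]; simp [h0]
    · have : ⟪u i, u i⟫ = 1 := by rw [huu]; simp [h0]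
      have hn : ‖u i‖ ^ 2 = 1 := by
        have := inner_self_eq_norm_sq (𝕜 := ℂ) (u i)
        rw [‹⟪u i, u i⟫ = 1›] at this
        simpa using this.symm
      nlinarith [norm_nonneg (u i)]
  · intro i h0
    have : ⟪u i, u i⟫ = 1 := by rw [huu]; simp [h0]
    have hn : ‖u i‖ ^ 2 = 1 := by
      have h2 := inner_self_eq_norm_sq (𝕜 := ℂ) (u i)
      rw [this] at h2
      simpa using h2.symm
    have h3 : (‖u i‖ - 1) * (‖u i‖ + 1) = 0 := by nlinarith
    rcases mul_eq_zero.1 h3 with h | h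
    · linarith
    · nlinarith [norm_nonneg (u i)]
  · intro x
    conv_lhs => rw [← V.sum_repr' x]; simp only [WithLp.ofLp_sum, WithLp.ofLp_smul]
    have hlin : toEuc (A *ᵥ (∑ i, ⟪V i, x⟫ • (V i : EuclideanSpace ℂ n)))
        = ∑ i, ⟪V i, x⟫ • toEuc (A *ᵥ (V i)) := by
      show toEuc (A.mulVecLin (∑ i, ⟪V i, x⟫ • (V i : EuclideanSpace ℂ n)))
        = ∑ i, ⟪V i, x⟫ • toEuc (A.mulVecLin (V i))
      rw [map_sum]
      rw [toEuc, WithLp.toLp_sum]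
      refine Finset.sum_congr rfl fun i _ => ?_
      rw [_root_.map_smul]
      rfl
    rw [hlin]
    refine Finset.sum_congr rfl fun i _ => ?_
    rw [hAVu i, smul_smul]
end SVD

section KF
variable {n : Type*} [Fintype n] [DecidableEq n] {κ : Type*} [Fintype κ]

lemma kyFan (A : Matrix n n ℂ) (hκ : Fintype.card κ ≤ Fintype.card n)
    (u' v' : κ → EuclideanSpace ℂ n)
    (hu'o : ∀ k l, k ≠ l → ⟪u' k, u' l⟫ = 0) (hu'n : ∀ k, ‖u' k‖ ≤ 1)
    (hv'o : ∀ k l, k ≠ l → ⟪v' k, v' l⟫ = 0) (hv'n : ∀ k, ‖v' k‖ ≤ 1) :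
    ∑ k, ‖⟪u' k, toEuc (A *ᵥ (v' k))⟫‖ ≤ maxSum (singvals A) (Fintype.card κ) := by
  classical
  obtain ⟨u, v, huo, hun, hun1, hv, hexp⟩ := exists_svd_data A
  set σ : n → ℝ := singvals A with hσ
  have hσ0 : ∀ i, 0 ≤ σ i := singvals_nonneg A
  have hvo : ∀ i j, i ≠ j → ⟪v i, v j⟫ = 0 := fun i j hij => by
    simpa [hij] using orthonormal_iff_ite.1 hv i j
  have hvn : ∀ i, ‖v i‖ ≤ 1 := fun i => le_of_eq (hv.1 i)
  have hinner : ∀ (y x : EuclideanSpace ℂ n),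
      ⟪y, toEuc (A *ᵥ x)⟫ = ∑ i, (⟪v i, x⟫ * (σ i : ℂ)) * ⟪y, u i⟫ := by
    intro y x
    rw [hexp x, inner_sum]
    exact Finset.sum_congr rfl fun i _ => inner_smul_right _ _ _
  have hterm : ∀ k, ‖⟪u' k, toEuc (A *ᵥ (v' k))⟫‖
      ≤ ∑ i, σ i * ((‖⟪u' k, u i⟫‖ ^ 2 + ‖⟪v i, v' k⟫‖ ^ 2) / 2) := by
    intro k
    rw [hinner]
    refine le_trans (norm_sum_le _ _) (Finset.sum_le_sum fun i _ => ?_)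
    rw [norm_mul, norm_mul, Complex.norm_real]
    rw [Real.norm_of_nonneg (hσ0 i)]
    have h1 : ‖⟪v i, v' k⟫‖ * σ i * ‖⟪u' k, u i⟫‖
        = σ i * (‖⟪u' k, u i⟫‖ * ‖⟪v i, v' k⟫‖) := by ring
    rw [h1]
    refine mul_le_mul_of_nonneg_left ?_ (hσ0 i)
    nlinarith [sq_nonneg (‖⟪u' k, u i⟫‖ - ‖⟪v i, v' k⟫‖), norm_nonneg (⟪u' k, u i⟫ : ℂ),
      norm_nonneg (⟪v i, v' k⟫ : ℂ)]
  set c : n → ℝ := fun i => ∑ k, (‖⟪u' k, u i⟫‖ ^ 2 + ‖⟪v i, v' k⟫‖ ^ 2) / 2 with hc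
  have hc0 : ∀ i, 0 ≤ c i := fun i =>
    Finset.sum_nonneg fun k _ => by positivity
  have hc1 : ∀ i, c i ≤ 1 := by
    intro i
    have hb1 : ∑ k, ‖⟪u' k, u i⟫‖ ^ 2 ≤ 1 := by
      refine le_trans (bessel_aux u' hu'o hu'n (u i)) ?_
      nlinarith [norm_nonneg (u i), hun i]
    have hb2 : ∑ k, ‖⟪v i, v' k⟫‖ ^ 2 ≤ 1 := by
      have : ∀ k, ‖⟪v i, v' k⟫‖ ^ 2 = ‖⟪v' k, v i⟫‖ ^ 2 := fun k => by
        rw [norm_inner_symm]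
      rw [Finset.sum_congr rfl fun k _ => this k]
      refine le_trans (bessel_aux v' hv'o hv'n (v i)) ?_
      nlinarith [norm_nonneg (v i), hvn i]
    simp only [hc]
    rw [← Finset.sum_div, Finset.sum_add_distrib]
    linarith
  have hcsum : ∑ i, c i ≤ (Fintype.card κ : ℝ) := by
    simp only [hc]
    rw [Finset.sum_comm]
    have hk1 : ∀ k, ∑ i, (‖⟪u' k, u i⟫‖ ^ 2 + ‖⟪v i, v' k⟫‖ ^ 2) / 2 ≤ 1 := by
      intro k
      have hb1 : ∑ i, ‖⟪u' k, u i⟫‖ ^ 2 ≤ 1 := by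
        have : ∀ i, ‖⟪u' k, u i⟫‖ ^ 2 = ‖⟪u i, u' k⟫‖ ^ 2 := fun i => by
          rw [norm_inner_symm]
        rw [Finset.sum_congr rfl fun i _ => this i]
        refine le_trans (bessel_aux u huo hun (u' k)) ?_
        nlinarith [norm_nonneg (u' k), hu'n k]
      have hb2 : ∑ i, ‖⟪v i, v' k⟫‖ ^ 2 ≤ 1 := by
        refine le_trans (bessel_aux v hvo hvn (v' k)) ?_
        nlinarith [norm_nonneg (v' k), hv'n k]
      rw [← Finset.sum_div, Finset.sum_add_distrib]
      linarith
    calc ∑ k, ∑ i, (‖⟪u' k, u i⟫‖ ^ 2 + ‖⟪v i, v' k⟫‖ ^ 2) / 2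
        ≤ ∑ _k : κ, (1 : ℝ) := Finset.sum_le_sum fun k _ => hk1 k
      _ = (Fintype.card κ : ℝ) := by simp
  calc ∑ k, ‖⟪u' k, toEuc (A *ᵥ (v' k))⟫‖
      ≤ ∑ k, ∑ i, σ i * ((‖⟪u' k, u i⟫‖ ^ 2 + ‖⟪v i, v' k⟫‖ ^ 2) / 2) :=
        Finset.sum_le_sum fun k _ => hterm k
    _ = ∑ i, σ i * c i := by
        rw [Finset.sum_comm]
        refine Finset.sum_congr rfl fun i _ => ?_
        simp only [hc]
        rw [Finset.mul_sum]
    _ ≤ maxSum σ (Fintype.card κ) :=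
        sum_mul_le_maxSum σ c hσ0 hc0 hc1 (Fintype.card κ) hκ hcsum
end KF

section Core
variable {m : Type*} [Fintype m] [DecidableEq m] {n : Type*} [Fintype n] [DecidableEq n]

lemma core (C : Matrix n n ℂ) (M : Matrix m m ℂ) (r : ℕ)
    (hcard : Fintype.card m * r ≤ Fintype.card n)
    (lift : EuclideanSpace ℂ m → Fin r → EuclideanSpace ℂ n)
    (h1 : ∀ u v s, ⟪lift u s, lift v s⟫ = ⟪u, v⟫)
    (h2 : ∀ u v s t, s ≠ t → ⟪lift u s, lift v t⟫ = 0)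
    (h3 : ∀ u v : EuclideanSpace ℂ m, ⟪u, toEuc (M *ᵥ v)⟫ = ∑ s, ⟪lift u s, toEuc (C *ᵥ lift v s)⟫)
    (k : ℕ) (hk : k ≤ Fintype.card m) :
    maxSum (singvals M) k ≤ maxSum (singvals C) (k * r) := by
  classical
  refine maxSum_le _ _ hk ?_
  intro T hT
  obtain ⟨u, v, huo, hun, hun1, hv, hexp⟩ := exists_svd_data M
  have hvo : ∀ i j, i ≠ j → ⟪v i, v j⟫ = 0 := fun i j hij => by
    simpa [hij] using orthonormal_iff_ite.1 hv i j
  have hvn : ∀ i, ‖v i‖ ≤ 1 := fun i => le_of_eq (hv.1 i)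
  have hdiag : ∀ j, ⟪u j, toEuc (M *ᵥ (v j))⟫ = ((singvals M j : ℂ)) := by
    intro j
    rw [hexp (v j), inner_sum]
    rw [Finset.sum_eq_single j (fun i _ hij => by
      rw [inner_smul_right, hvo i j hij]; simp) (by simp)]
    rw [inner_smul_right, orthonormal_iff_ite.1 hv j j]
    simp only [if_pos rfl, mul_one]
    rcases eq_or_ne (singvals M j) 0 with h0 | h0
    · simp [h0]
    · rw [inner_self_eq_norm_sq_to_K, hun1 j h0]
      simp
  have hnormlift : ∀ (w : EuclideanSpace ℂ m) s, ‖lift w s‖ = ‖w‖ := by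
    intro w s
    rw [@norm_eq_sqrt_re_inner ℂ, @norm_eq_sqrt_re_inner ℂ _ _ _ _ w, h1]
  set κ := ({j // j ∈ T} × Fin r)
  have hκcard : Fintype.card κ = k * r := by
    simp [κ, Fintype.card_prod, Fintype.card_coe, hT]
  have hκn : Fintype.card κ ≤ Fintype.card n := by
    rw [hκcard]
    exact le_trans (Nat.mul_le_mul_right r hk) hcard
  set u' : κ → EuclideanSpace ℂ n := fun p => lift (u p.1) p.2 with hu'
  set v' : κ → EuclideanSpace ℂ n := fun p => lift (v p.1) p.2 with hv'
  have hu'o : ∀ p q : κ, p ≠ q → ⟪u' p, u' q⟫ = 0 := by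
    rintro ⟨i, s⟩ ⟨j, t⟩ hpq
    rcases eq_or_ne s t with rfl | hst
    · have hij : (i : m) ≠ (j : m) := by
        intro h
        exact hpq (by simp [Subtype.ext h])
      rw [hu']
      simp only
      rw [h1]
      exact huo i j hij
    · exact h2 _ _ _ _ hst
  have hv'o : ∀ p q : κ, p ≠ q → ⟪v' p, v' q⟫ = 0 := by
    rintro ⟨i, s⟩ ⟨j, t⟩ hpq
    rcases eq_or_ne s t with rfl | hst
    · have hij : (i : m) ≠ (j : m) := by
        intro h
        exact hpq (by simp [Subtype.ext h])
      rw [hv']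
      simp only
      rw [h1]
      exact hvo i j hij
    · exact h2 _ _ _ _ hst
  have hu'n : ∀ p : κ, ‖u' p‖ ≤ 1 := fun p => by rw [hu']; simp only [hnormlift]; exact hun p.1
  have hv'n : ∀ p : κ, ‖v' p‖ ≤ 1 := fun p => by rw [hv']; simp only [hnormlift]; exact hvn p.1
  have hchain : ∑ j ∈ T, singvals M j ≤ ∑ p : κ, ‖⟪u' p, toEuc (C *ᵥ (v' p))⟫‖ := by
    have e1 : ∀ j, singvals M j = ∑ s : Fin r, RCLike.re ⟪lift (u j) s, toEuc (C *ᵥ lift (v j) s)⟫ := by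
      intro j
      have := congrArg RCLike.re ((hdiag j).symm.trans (h3 (u j) (v j)))
      rw [map_sum] at this
      simpa using this
    calc ∑ j ∈ T, singvals M j
        = ∑ j ∈ T, ∑ s : Fin r, RCLike.re ⟪lift (u j) s, toEuc (C *ᵥ lift (v j) s)⟫ :=
          Finset.sum_congr rfl fun j _ => e1 j
      _ ≤ ∑ j ∈ T, ∑ s : Fin r, ‖⟪lift (u j) s, toEuc (C *ᵥ lift (v j) s)⟫‖ := by
          refine Finset.sum_le_sum fun j _ => Finset.sum_le_sum fun s _ => ?_
          exact RCLike.re_le_norm _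
      _ = ∑ p : κ, ‖⟪u' p, toEuc (C *ᵥ (v' p))⟫‖ := by
          rw [Fintype.sum_prod_type]
          rw [← Finset.sum_coe_sort T
            (fun j => ∑ s : Fin r, ‖⟪lift (u j) s, toEuc (C *ᵥ lift (v j) s)⟫‖)]
  refine le_trans hchain (le_trans (kyFan C hκn u' v' hu'o hu'n hv'o hv'n) ?_)
  rw [hκcard]
end Core

section Assembly

lemma maxSum_le_sum_first {N : ℕ} {ι : Type*} [Fintype ι] (x : ι → ℝ) (μ : Fin N → ℝ)
    (hμ : Antitone μ) (g : Fin N ≃ ι) (hg : ∀ m, μ m = x (g m)) (K : ℕ) (hK : K ≤ N) :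
    maxSum x K ≤ ∑ j : Fin K, μ (Fin.castLE hK j) := by
  classical
  have hcard : Fintype.card ι = N := by
    rw [← Fintype.card_congr g, Fintype.card_fin]
  refine maxSum_le _ _ (hcard ▸ hK) fun S hS => ?_
  have e1 : ∑ p ∈ S, x p = ∑ mm ∈ S.image g.symm, μ mm := by
    rw [Finset.sum_image (fun a _ b _ h => g.symm.injective h)]
    refine Finset.sum_congr rfl fun p _ => ?_
    rw [hg (g.symm p), Equiv.apply_symm_apply]
  rw [e1]
  exact sum_antitone_le μ hμ _ (by rw [Finset.card_image_of_injective _ g.symm.injective, hS]) hK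

lemma sum_first_le_maxSum {a b : ℕ} (μ : Fin (a * b) → ℝ) (y : Fin a → ℝ)
    (hy : ∀ j : Fin a, y j = ∑ s : Fin b, μ (finProdFinEquiv (j, s)))
    (k : ℕ) (hk : k ≤ a) (hkb : k * b ≤ a * b) :
    ∑ p : Fin (k * b), μ (Fin.castLE hkb p) ≤ maxSum y k := by
  classical
  rw [← Equiv.sum_comp (finProdFinEquiv : Fin k × Fin b ≃ Fin (k * b))
    (fun p => μ (Fin.castLE hkb p))]
  rw [Fintype.sum_prod_type]
  have hcast : ∀ (j : Fin k) (s : Fin b),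
      Fin.castLE hkb (finProdFinEquiv (j, s)) = finProdFinEquiv (Fin.castLE hk j, s) := by
    intro j s
    apply Fin.ext
    simp [finProdFinEquiv]
  calc ∑ j : Fin k, ∑ s : Fin b, (fun p => μ (Fin.castLE hkb p)) (finProdFinEquiv (j, s))
      = ∑ j : Fin k, y (Fin.castLE hk j) := by
        refine Finset.sum_congr rfl fun j _ => ?_
        rw [hy (Fin.castLE hk j)]
        exact Finset.sum_congr rfl fun s _ => by rw [← hcast j s]
    _ = ∑ j ∈ Finset.univ.map (Fin.castLEEmb hk), y j := by
        rw [Finset.sum_map]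
        rfl
    _ ≤ maxSum y k := sum_le_maxSum y k _ (by simp)
end Assembly

section Lifts
variable {d1 d2 : ℕ} (C : Matrix (Fin d1 × Fin d2) (Fin d1 × Fin d2) ℂ)

noncomputable def lift2 (u : EuclideanSpace ℂ (Fin d1)) (s : Fin d2) :
    EuclideanSpace ℂ (Fin d1 × Fin d2) :=
  toEuc (fun p => if p.2 = s then u p.1 else 0)

noncomputable def lift1 (u : EuclideanSpace ℂ (Fin d2)) (s : Fin d1) :
    EuclideanSpace ℂ (Fin d1 × Fin d2) :=
  toEuc (fun p => if p.1 = s then u p.2 else 0)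

lemma lift2_h1 (u v : EuclideanSpace ℂ (Fin d1)) (s : Fin d2) :
    ⟪lift2 u s, lift2 v s⟫ = ⟪u, v⟫ := by
  simp [lift2, toEuc, PiLp.inner_apply, RCLike.inner_apply, Fintype.sum_prod_type,
    apply_ite, ite_mul, zero_mul, mul_ite, mul_zero]

lemma lift2_h2 (u v : EuclideanSpace ℂ (Fin d1)) (s t : Fin d2) (hst : s ≠ t) :
    ⟪lift2 u s, lift2 v t⟫ = 0 := by
  simp only [lift2, toEuc, PiLp.inner_apply, RCLike.inner_apply, Fintype.sum_prod_type]
  refine Finset.sum_eq_zero fun i _ => Finset.sum_eq_zero fun w _ => ?_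
  rcases eq_or_ne w s with rfl | hws
  · simp [hst]
  · simp [hws]

lemma lift2_h3 (u v : EuclideanSpace ℂ (Fin d1)) :
    ⟪u, toEuc ((ptrace2 C) *ᵥ v)⟫ = ∑ s, ⟪lift2 u s, toEuc (C *ᵥ lift2 v s)⟫ := by
  simp only [lift2, toEuc, PiLp.inner_apply, RCLike.inner_apply, Matrix.mulVec,
    dotProduct, ptrace2, Matrix.of_apply, Fintype.sum_prod_type, apply_ite, map_zero,
    ite_mul, zero_mul, mul_ite, mul_zero, Finset.sum_ite_eq', Finset.mem_univ, if_true]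
  have expand : ∀ i : Fin d1,
      (starRingEnd ℂ) (u i) * ∑ j : Fin d1, (∑ s : Fin d2, C (i, s) (j, s)) * v j
        = ∑ s : Fin d2, (starRingEnd ℂ) (u i) * ∑ j : Fin d1, C (i, s) (j, s) * v j := by
    intro i
    calc (starRingEnd ℂ) (u i) * ∑ j : Fin d1, (∑ s : Fin d2, C (i, s) (j, s)) * v j
        = ∑ j : Fin d1, ∑ s : Fin d2, (starRingEnd ℂ) (u i) * (C (i, s) (j, s) * v j) := by
          rw [Finset.mul_sum]
          refine Finset.sum_congr rfl fun j _ => ?_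
          rw [Finset.sum_mul, Finset.mul_sum]
      _ = ∑ s : Fin d2, ∑ j : Fin d1, (starRingEnd ℂ) (u i) * (C (i, s) (j, s) * v j) :=
          Finset.sum_comm
      _ = ∑ s : Fin d2, (starRingEnd ℂ) (u i) * ∑ j : Fin d1, C (i, s) (j, s) * v j := by
          refine Finset.sum_congr rfl fun s _ => ?_
          rw [Finset.mul_sum]
  simp only [Finset.sum_mul]
  conv_rhs => rw [Finset.sum_comm]
  exact Finset.sum_congr rfl fun i _ => Finset.sum_comm

lemma lift1_h1 (u v : EuclideanSpace ℂ (Fin d2)) (s : Fin d1) :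
    ⟪lift1 u s, lift1 v s⟫ = ⟪u, v⟫ := by
  simp [lift1, toEuc, PiLp.inner_apply, RCLike.inner_apply, Fintype.sum_prod_type,
    apply_ite, ite_mul, zero_mul, mul_ite, mul_zero]

lemma lift1_h2 (u v : EuclideanSpace ℂ (Fin d2)) (s t : Fin d1) (hst : s ≠ t) :
    ⟪lift1 u s, lift1 v t⟫ = 0 := by
  simp only [lift1, toEuc, PiLp.inner_apply, RCLike.inner_apply, Fintype.sum_prod_type]
  refine Finset.sum_eq_zero fun i _ => Finset.sum_eq_zero fun w _ => ?_
  rcases eq_or_ne i s with rfl | his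
  · simp [hst]
  · simp [his]

lemma lift1_h3 (u v : EuclideanSpace ℂ (Fin d2)) :
    ⟪u, toEuc ((ptrace1 C) *ᵥ v)⟫ = ∑ s, ⟪lift1 u s, toEuc (C *ᵥ lift1 v s)⟫ := by
  simp only [lift1, toEuc, PiLp.inner_apply, RCLike.inner_apply, Matrix.mulVec,
    dotProduct, ptrace1, Matrix.of_apply, Fintype.sum_prod_type_right, apply_ite,
    map_zero, ite_mul, zero_mul, mul_ite, mul_zero, Finset.sum_ite_eq', Finset.mem_univ, if_true]
  have expand : ∀ t : Fin d2,
      (starRingEnd ℂ) (u t) * ∑ w : Fin d2, (∑ i : Fin d1, C (i, t) (i, w)) * v w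
        = ∑ i : Fin d1, (starRingEnd ℂ) (u t) * ∑ w : Fin d2, C (i, t) (i, w) * v w := by
    intro t
    calc (starRingEnd ℂ) (u t) * ∑ w : Fin d2, (∑ i : Fin d1, C (i, t) (i, w)) * v w
        = ∑ w : Fin d2, ∑ i : Fin d1, (starRingEnd ℂ) (u t) * (C (i, t) (i, w) * v w) := by
          rw [Finset.mul_sum]
          refine Finset.sum_congr rfl fun w _ => ?_
          rw [Finset.sum_mul, Finset.mul_sum]
      _ = ∑ i : Fin d1, ∑ w : Fin d2, (starRingEnd ℂ) (u t) * (C (i, t) (i, w) * v w) :=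
          Finset.sum_comm
      _ = ∑ i : Fin d1, (starRingEnd ℂ) (u t) * ∑ w : Fin d2, C (i, t) (i, w) * v w := by
          refine Finset.sum_congr rfl fun i _ => ?_
          rw [Finset.mul_sum]
  simp only [Finset.sum_mul]
  conv_rhs => rw [Finset.sum_comm]
  exact Finset.sum_congr rfl fun t _ => Finset.sum_comm
end Lifts

theorem singular_values_weak_majorization (d1 d2 : ℕ)
    (C : Matrix (Fin d1 × Fin d2) (Fin d1 × Fin d2) ℂ)
    -- `μ` lists the singular values of `C` in decreasing order
    (μ : Fin (d1 * d2) → ℝ) (hμ : Antitone μ)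
    (g : Fin (d1 * d2) ≃ Fin d1 × Fin d2) (hg : ∀ k, μ k = singvals C (g k)) :
    WeakMajorizes (singvals (ptrace2 C))
      (fun j : Fin d1 => ∑ s : Fin d2, μ (finProdFinEquiv (j, s))) ∧
    WeakMajorizes (singvals (ptrace1 C))
      (fun i : Fin d2 => ∑ s : Fin d1, μ (finCongr (Nat.mul_comm d2 d1) (finProdFinEquiv (i, s)))) := by
  constructor
  · intro k
    rcases le_or_gt k d1 with hk | hk
    · have hkb : k * d2 ≤ d1 * d2 := Nat.mul_le_mul_right d2 hk
      have hcore := core C (ptrace2 C) d2 (by simp) lift2 lift2_h1 lift2_h2 (lift2_h3 C)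
        k (by simpa using hk)
      have h11 := maxSum_le_sum_first (singvals C) μ hμ g hg (k * d2) hkb
      have hfin := sum_first_le_maxSum μ
        (fun j : Fin d1 => ∑ s : Fin d2, μ (finProdFinEquiv (j, s))) (fun _ => rfl) k hk hkb
      linarith
    · rw [maxSum_of_card_lt _ _ (by simpa using hk), maxSum_of_card_lt _ _ (by simpa using hk)]
  · intro k
    rcases le_or_gt k d2 with hk | hk
    · have hkb : k * d1 ≤ d2 * d1 := Nat.mul_le_mul_right d1 hk
      have hkb' : k * d1 ≤ d1 * d2 := hkb.trans_eq (Nat.mul_comm d2 d1)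
      have hcore := core C (ptrace1 C) d1
        (by simp only [Fintype.card_prod, Fintype.card_fin]
            exact le_of_eq (Nat.mul_comm d2 d1)) lift1 lift1_h1 lift1_h2
        (lift1_h3 C) k (by simpa using hk)
      have h11 := maxSum_le_sum_first (singvals C) μ hμ g hg (k * d1) hkb'
      have hμ' : Antitone (fun p : Fin (d2 * d1) => μ (finCongr (Nat.mul_comm d2 d1) p)) :=
        fun p q hpq => hμ (by
          simp only [Fin.le_def, finCongr_apply, Fin.coe_cast]
          exact hpq)
      have hfin := sum_first_le_maxSum (fun p : Fin (d2 * d1) => μ (finCongr (Nat.mul_comm d2 d1) p))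
        (fun i : Fin d2 => ∑ s : Fin d1, μ (finCongr (Nat.mul_comm d2 d1) (finProdFinEquiv (i, s))))
        (fun _ => rfl) k hk hkb
      have hbridge : ∑ j : Fin (k * d1), μ (Fin.castLE hkb' j)
          = ∑ p : Fin (k * d1), μ (finCongr (Nat.mul_comm d2 d1) (Fin.castLE hkb p)) := by
        refine Finset.sum_congr rfl fun p _ => congrArg μ (Fin.ext ?_)
        simp
      rw [hbridge] at h11
      exact le_trans hcore (le_trans h11 hfin)
    · rw [maxSum_of_card_lt _ _ (by simpa using hk), maxSum_of_card_lt _ _ (by simpa using hk)]
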